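/- Let k be a field of characteristic p ≥ 2d and let (c^{r})_{r∈ℕ³} be d×d matrices satisfying the Heisenberg fundamental relation (c^{(0,0,0)} = 1, all but finitely many zero, and c^s c^t = Σ_l C(s_1+t_1−l,t_1) C(s_2+t_2−l,s_2) ((s_3+t_3+l)!/(s_3!t_3!l!)) c^{s+t+(−l,−l,l)}), and additionally that X_{(r)} := c^{(r,0,0)} = Γ(r)^{−1} X_0^{r_0}···X_m^{r_m} with all X_i nilpotent d×d matrices, similarly for Y and Z. Then for each m, [X_m, Y_m] = Z_m, where X_m = c^{(p^m,0,0)}, Y_m = c^{(0,p^m,0)}, Z_m = c^{(0,0,p^m)}. -/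

import Mathlib

-- product of list containing a nilpotent power with big exponent is zero
lemma aux_listprod_zero {k : Type*} [Field k] {d : ℕ}
    (W : ℕ → Matrix (Fin d) (Fin d) k) (hW : ∀ i, W i ^ d = 0)
    (q : ℕ) (f : ℕ → ℕ) (hf : d ≤ f q) :
    ((List.range (q + 1)).map (fun i => W i ^ f i)).prod = 0 := by
  apply List.prod_eq_zero
  refine List.mem_map.2 ⟨q, List.mem_range.2 (Nat.lt_succ_self q), ?_⟩
  have h : W q ^ f q = W q ^ d * W q ^ (f q - d) := by
    rw [← pow_add, Nat.add_sub_cancel' hf]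
  rw [h, hW, zero_mul]

theorem stmt_17 {k : Type*} [Field k] {p d : ℕ} [hp : Fact p.Prime] [CharP k p]
    (hpd : 2 * d ≤ p)
    (c : ℕ × ℕ × ℕ → Matrix (Fin d) (Fin d) k)
    (hfin : ∃ N, ∀ r : ℕ × ℕ × ℕ, N < r.1 + r.2.1 + r.2.2 → c r = 0)
    (h0 : c (0, 0, 0) = 1)
    (hrel : ∀ s t : ℕ × ℕ × ℕ,
      c s * c t =
        ∑ l ∈ Finset.range (min s.1 t.2.1 + 1),
          (((s.1 + t.1 - l).choose t.1 * ((s.2.1 + t.2.1 - l).choose s.2.1) *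
            ((s.2.2 + t.2.2 + l).factorial /
              (s.2.2.factorial * t.2.2.factorial * l.factorial)) : ℕ) : k) •
            c (s.1 + t.1 - l, s.2.1 + t.2.1 - l, s.2.2 + t.2.2 + l))
    (X Y Z : ℕ → Matrix (Fin d) (Fin d) k)
    (hXnil : ∀ i, X i ^ d = 0) (hYnil : ∀ i, Y i ^ d = 0) (hZnil : ∀ i, Z i ^ d = 0)
    (hX : ∀ r m, r < p ^ (m + 1) →
      c (r, 0, 0) = (∏ i ∈ Finset.range (m + 1), ((r / p ^ i % p).factorial : k))⁻¹ •
        ((List.range (m + 1)).map (fun i => X i ^ (r / p ^ i % p))).prod)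
    (hY : ∀ r m, r < p ^ (m + 1) →
      c (0, r, 0) = (∏ i ∈ Finset.range (m + 1), ((r / p ^ i % p).factorial : k))⁻¹ •
        ((List.range (m + 1)).map (fun i => Y i ^ (r / p ^ i % p))).prod)
    (hZ : ∀ r m, r < p ^ (m + 1) →
      c (0, 0, r) = (∏ i ∈ Finset.range (m + 1), ((r / p ^ i % p).factorial : k))⁻¹ •
        ((List.range (m + 1)).map (fun i => Z i ^ (r / p ^ i % p))).prod) :
    ∀ m, c (p ^ m, 0, 0) * c (0, p ^ m, 0) - c (0, p ^ m, 0) * c (p ^ m, 0, 0) =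
      c (0, 0, p ^ m) := by
  intro m
  have hppos : 0 < p := hp.out.pos
  -- Lemma A : c (n,0,e) = c (n,0,0) * c (0,0,e)
  have hA : ∀ n e : ℕ, c (n, 0, e) = c (n, 0, 0) * c (0, 0, e) := by
    intro n e
    have h := hrel (n, 0, 0) (0, 0, e)
    simp only [min_zero, zero_add, Finset.sum_range_one, Nat.add_zero, Nat.sub_zero,
      Nat.choose_zero_right, Nat.factorial_zero, one_mul, mul_one,
      Nat.div_self (Nat.factorial_pos e), Nat.cast_one, one_smul] at h
    exact h.symm
  -- Lemma B : the key recursion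
  have hB : ∀ n e : ℕ, c (n, 0, e) * c (0, n, 0) =
      ∑ l ∈ Finset.range (n + 1), (((e + l).choose l : ℕ) : k) • c (n - l, n - l, e + l) := by
    intro n e
    have h := hrel (n, 0, e) (0, n, 0)
    simp only [min_self, Nat.add_zero, zero_add, Nat.choose_zero_right, one_mul,
      Nat.factorial_zero, mul_one] at h
    rw [h]
    apply Finset.sum_congr rfl
    intro l _
    congr 2
    rw [Nat.choose_eq_factorial_div_factorial (Nat.le_add_left l e), Nat.add_sub_cancel,
      mul_comm l.factorial e.factorial]
  -- Lemma C : pure products vanish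
  have hC : ∀ n e : ℕ, 1 ≤ n → 1 ≤ e → n + e = p ^ m → c (n, 0, e) = 0 := by
    intro n e hn he hne
    cases m with
    | zero => simp at hne; omega
    | succ q =>
      have hnlt : n < p ^ (q + 1) := by omega
      have helt : e < p ^ (q + 1) := by omega
      have hqpos : 0 < p ^ q := Nat.pow_pos (n := q) hppos
      have hps : p ^ (q + 1) = p ^ q * p := pow_succ p q
      have ha : n / p ^ q < p := Nat.div_lt_of_lt_mul (by omega)
      have hb : e / p ^ q < p := Nat.div_lt_of_lt_mul (by omega)
      have hsum : p - 1 ≤ n / p ^ q + e / p ^ q := by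
        have hadd := Nat.add_div (a := n) (b := e) hqpos
        have hpe : (n + e) / p ^ q = p := by
          rw [hne, hps, Nat.mul_div_cancel_left _ hqpos]
        rw [hpe] at hadd
        split at hadd <;> omega
      have hcase : d ≤ n / p ^ q % p ∨ d ≤ e / p ^ q % p := by
        rw [Nat.mod_eq_of_lt ha, Nat.mod_eq_of_lt hb]; omega
      rw [hA]
      rcases hcase with hcase | hcase
      · have := hX n q hnlt
        rw [aux_listprod_zero X hXnil q _ hcase, smul_zero] at this
        rw [this, zero_mul]
      · have := hZ e q helt
        rw [aux_listprod_zero Z hZnil q _ hcase, smul_zero] at this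
        rw [this, mul_zero]
  -- Lemma D : mixed terms vanish
  have hD : ∀ n e : ℕ, 1 ≤ n → 1 ≤ e → n + e = p ^ m → c (n, n, e) = 0 := by
    intro n
    induction n using Nat.strong_induction_on with
    | _ n IH =>
      intro e hn he hne
      have hb := hB n e
      rw [hC n e hn he hne, zero_mul, Finset.sum_range_succ'] at hb
      have hzero : ∀ i ∈ Finset.range n,
          (((e + (i + 1)).choose (i + 1) : ℕ) : k) • c (n - (i + 1), n - (i + 1), e + (i + 1)) = 0 := by
        intro i hi
        have hi' := Finset.mem_range.1 hi
        rcases eq_or_lt_of_le (Nat.succ_le_of_lt hi') with h | h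
        · have hcoe : (((e + (i + 1)).choose (i + 1) : ℕ) : k) = 0 := by
            have hEq : e + (i + 1) = p ^ m := by omega
            have hdvd : p ∣ (p ^ m).choose (i + 1) :=
              Nat.Prime.dvd_choose_pow hp.out (by omega) (by omega)
            rw [hEq]
            exact (CharP.cast_eq_zero_iff k p _).2 hdvd
          rw [hcoe, zero_smul]
        · rw [IH (n - (i + 1)) (by omega) (e + (i + 1)) (by omega) (by omega) (by omega),
            smul_zero]
      rw [Finset.sum_eq_zero hzero, zero_add, Nat.add_zero, Nat.sub_zero,
        Nat.choose_zero_right, Nat.cast_one, one_smul] at hb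
      exact hb.symm
  -- assemble
  have h1 := hrel (p ^ m, 0, 0) (0, p ^ m, 0)
  have h2 := hrel (0, p ^ m, 0) (p ^ m, 0, 0)
  simp only [min_self, Nat.add_zero, zero_add, Nat.choose_zero_right, one_mul, mul_one,
    Nat.factorial_zero, Nat.div_self (Nat.factorial_pos _), Nat.cast_one, one_smul] at h1
  simp only [min_zero, zero_add, Finset.sum_range_one, Nat.add_zero, Nat.sub_zero,
    Nat.choose_self, Nat.factorial_zero, one_mul, mul_one, Nat.div_one, Nat.cast_one, one_smul] at h2
  rw [h1, h2, Finset.sum_range_succ', Nat.sub_zero, add_sub_cancel_right]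
  rw [Finset.sum_eq_single_of_mem (p ^ m - 1)
    (Finset.mem_range.2 (by have := Nat.pow_pos (n := m) hppos; omega))]
  · have h1' : p ^ m - 1 + 1 = p ^ m := by
      have := Nat.pow_pos (n := m) hppos; omega
    rw [h1', Nat.sub_self]
  · intro i hi hne
    have hi' := Finset.mem_range.1 hi
    have hpm := Nat.pow_pos (n := m) hppos
    exact hD (p ^ m - (i + 1)) (i + 1) (by omega) (by omega) (by omega)
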